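/- Let m and n be positive integers with n > m ≥ 1, and let f_i(x) = m x + b_i for i = 1, ..., n be affine maps of ℝ with each b_i a rational number. Then there exist two non-identical finite sequences of indices in {1, ..., n} of the same length L whose corresponding compositions of the maps f_i are equal as functions on ℝ; in particular, the semigroup generated by f_1, ..., f_n is not free with free basis f_1, ..., f_n. -/

import Mathlib

private def Tword {n : ℕ} (m : ℕ) (b : Fin n → ℚ) (w : List (Fin n)) : ℚ :=
  w.foldr (fun i s => b i + m * s) 0

private def Zword {n : ℕ} (m : ℕ) (c : Fin n → ℤ) (w : List (Fin n)) : ℤ :=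
  w.foldr (fun i s => c i + m * s) 0

private lemma comp_eq {n : ℕ} (m : ℕ) (b : Fin n → ℚ) (f : Fin n → ℝ → ℝ)
    (hf : ∀ i, f i = fun x => (m : ℝ) * x + (b i : ℝ)) (w : List (Fin n)) :
    (w.map f).foldr (· ∘ ·) id = fun x => (m : ℝ) ^ w.length * x + ((Tword m b w : ℚ) : ℝ) := by
  induction w with
  | nil => funext x; simp [Tword]
  | cons i w ih =>
    funext x
    simp only [List.map_cons, List.foldr_cons, Function.comp_apply, ih, hf, Tword,
      List.length_cons]
    push_cast
    ring

private lemma Zword_bound {n : ℕ} (m : ℕ) (c : Fin n → ℤ) (M : ℕ) (hM : ∀ i, |c i| ≤ (M : ℤ))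
    (w : List (Fin n)) : |Zword m c w| ≤ M * ∑ k ∈ Finset.range w.length, (m : ℤ) ^ k := by
  induction w with
  | nil => simp [Zword]
  | cons i w ih =>
    calc |Zword m c (i :: w)| = |c i + (m : ℤ) * Zword m c w| := rfl
      _ ≤ |c i| + |(m : ℤ) * Zword m c w| := abs_add_le _ _
      _ = |c i| + (m : ℤ) * |Zword m c w| := by
          rw [abs_mul, abs_of_nonneg (by positivity : (0:ℤ) ≤ (m : ℤ))]
      _ ≤ (M : ℤ) + (m : ℤ) * ((M : ℤ) * ∑ k ∈ Finset.range w.length, (m : ℤ) ^ k) := by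
          gcongr
          · exact hM i
      _ = M * ∑ k ∈ Finset.range (w.length + 1), (m : ℤ) ^ k := by
          rw [geom_sum_succ]
          ring

private lemma geom_le' (m L : ℕ) (hm : 1 ≤ m) :
    ∑ k ∈ Finset.range L, (m : ℤ) ^ k ≤ (L : ℤ) * (m : ℤ) ^ L := by
  calc ∑ k ∈ Finset.range L, (m : ℤ) ^ k ≤ ∑ _k ∈ Finset.range L, (m : ℤ) ^ L := by
        apply Finset.sum_le_sum
        intro k hk
        exact pow_le_pow_right₀ (by exact_mod_cast hm) (le_of_lt (Finset.mem_range.mp hk))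
    _ = (L : ℤ) * (m : ℤ) ^ L := by
        simp [Finset.sum_const, nsmul_eq_mul]

private lemma pow_aux (m : ℕ) (K : ℕ) : m ^ K * (m + K) ≤ (m + 1) ^ K * m := by
  induction K with
  | zero => simp
  | succ K ih =>
    have h2 : m ^ K ≤ (m + 1) ^ K := Nat.pow_le_pow_left (Nat.le_succ m) K
    calc m ^ (K + 1) * (m + (K + 1)) = m * (m ^ K * (m + K)) + m * m ^ K := by ring
      _ ≤ m * ((m + 1) ^ K * m) + m * (m + 1) ^ K := by gcongr
      _ = (m + 1) ^ (K + 1) * m := by ring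

private lemma exists_L (M m n : ℕ) (hm : 1 ≤ m) (hmn : m < n) :
    ∃ L, 2 * (M * L * m ^ L) + 1 < n ^ L := by
  refine ⟨2 * (m ^ 2 * (4 * M + 2)), ?_⟩
  set K := m ^ 2 * (4 * M + 2) with hK
  have hK2 : 2 ≤ K := by
    have h0 : 1 ≤ m ^ 2 := Nat.one_le_pow _ _ (by omega)
    calc 2 = 1 * 2 := by ring
      _ ≤ m ^ 2 * (4 * M + 2) := Nat.mul_le_mul h0 (by omega)
      _ = K := hK.symm
  have h1 : m ^ K * K ≤ m ^ K * (m + K) := by gcongr; omega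
  have h3 : m ^ K * K ≤ (m + 1) ^ K * m := le_trans h1 (pow_aux m K)
  have h4 : (m ^ K * K) ^ 2 ≤ ((m + 1) ^ K * m) ^ 2 := Nat.pow_le_pow_left h3 2
  have h5 : m ^ (2 * K) * K ^ 2 ≤ (m + 1) ^ (2 * K) * m ^ 2 := by
    calc m ^ (2 * K) * K ^ 2 = (m ^ K * K) ^ 2 := by rw [pow_mul]; ring
      _ ≤ ((m + 1) ^ K * m) ^ 2 := h4
      _ = (m + 1) ^ (2 * K) * m ^ 2 := by rw [pow_mul]; ring
  have h6 : m ^ (2 * K) * (K * (4 * M + 2)) * m ^ 2 ≤ (m + 1) ^ (2 * K) * m ^ 2 := by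
    calc m ^ (2 * K) * (K * (4 * M + 2)) * m ^ 2
        = m ^ (2 * K) * (K * (m ^ 2 * (4 * M + 2))) := by ring
      _ = m ^ (2 * K) * K ^ 2 := by rw [← hK]; ring
      _ ≤ (m + 1) ^ (2 * K) * m ^ 2 := h5
  have h7 : m ^ (2 * K) * (K * (4 * M + 2)) ≤ (m + 1) ^ (2 * K) :=
    Nat.le_of_mul_le_mul_right h6 (by positivity)
  have h8 : (m + 1) ^ (2 * K) ≤ n ^ (2 * K) := Nat.pow_le_pow_left (by omega) _
  have hpow : 1 ≤ m ^ (2 * K) := Nat.one_le_pow _ _ (by omega)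
  calc 2 * (M * (2 * K) * m ^ (2 * K)) + 1
      = 4 * M * K * m ^ (2 * K) + 1 := by ring
    _ < 4 * M * K * m ^ (2 * K) + 2 * K * m ^ (2 * K) := by nlinarith
    _ = m ^ (2 * K) * (K * (4 * M + 2)) := by ring
    _ ≤ n ^ (2 * K) := le_trans h7 h8

/-- If `n > m ≥ 1` and `f i x = m * x + b i` with `b i` rational for `i = 1, …, n`,
then there are two distinct index words of the same length `L` whose compositions
coincide as functions on `ℝ`; in particular the semigroup generated by
`f 1, …, f n` is not free with free basis `f 1, …, f n`. -/
theorem affine_semigroup_not_free_of_equal_slopes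
    (m n : ℕ) (hm : 1 ≤ m) (hmn : m < n)
    (b : Fin n → ℚ) (f : Fin n → ℝ → ℝ)
    (hf : ∀ i, f i = fun x => (m : ℝ) * x + (b i : ℝ)) :
    ∃ L : ℕ, ∃ w₁ w₂ : List (Fin n),
      w₁.length = L ∧ w₂.length = L ∧ w₁ ≠ w₂ ∧
      (w₁.map f).foldr (· ∘ ·) id = (w₂.map f).foldr (· ∘ ·) id := by
  classical
  -- clear denominators
  obtain ⟨D, hD0, c, hbc⟩ :
      ∃ D : ℕ, 0 < D ∧ ∃ c : Fin n → ℤ, ∀ i, (b i) * (D : ℚ) = (c i : ℚ) := by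
    refine ⟨∏ j, (b j).den, Finset.prod_pos (fun j _ => (b j).pos), ?_⟩
    refine ⟨fun i => (b i).num * (((∏ j, (b j).den) / (b i).den : ℕ) : ℤ), fun i => ?_⟩
    obtain ⟨d, hd⟩ : (b i).den ∣ ∏ j, (b j).den := Finset.dvd_prod_of_mem _ (Finset.mem_univ i)
    have hden0 : ((b i).den : ℚ) ≠ 0 := by exact_mod_cast (b i).den_nz
    show b i * ((∏ j, (b j).den : ℕ) : ℚ)
        = (((b i).num * (((∏ j, (b j).den) / (b i).den : ℕ) : ℤ) : ℤ) : ℚ)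
    rw [hd, Nat.mul_div_cancel_left _ (b i).pos]
    push_cast
    rw [show (b i) * (((b i).den : ℚ) * (d : ℚ)) = ((b i) * (b i).den) * d by ring,
      Rat.mul_den_eq_num]
  -- bound on the numerators
  set M : ℕ := ∑ i, (c i).natAbs with hMdef
  have hM : ∀ i, |c i| ≤ (M : ℤ) := by
    intro i
    rw [Int.abs_eq_natAbs]
    exact_mod_cast Finset.single_le_sum (f := fun i => (c i).natAbs)
      (fun j _ => Nat.zero_le _) (Finset.mem_univ i)
  obtain ⟨L, hL⟩ := exists_L M m n hm hmn
  -- pigeonhole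
  have hmaps : ∀ v : Fin L → Fin n,
      Zword m c (List.ofFn v) ∈ Finset.Icc (-((M * L * m ^ L : ℕ) : ℤ)) ((M * L * m ^ L : ℕ) : ℤ) := by
    intro v
    have h := Zword_bound m c M hM (List.ofFn v)
    rw [List.length_ofFn] at h
    have h2 : |Zword m c (List.ofFn v)| ≤ ((M * L * m ^ L : ℕ) : ℤ) := by
      refine h.trans ?_
      calc (M : ℤ) * ∑ k ∈ Finset.range L, (m : ℤ) ^ k
          ≤ (M : ℤ) * ((L : ℤ) * (m : ℤ) ^ L) :=
            mul_le_mul_of_nonneg_left (geom_le' m L hm) (by positivity)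
        _ = ((M * L * m ^ L : ℕ) : ℤ) := by push_cast; ring
    rw [Finset.mem_Icc]
    exact abs_le.mp h2
  have hcard : (Finset.Icc (-((M * L * m ^ L : ℕ) : ℤ)) ((M * L * m ^ L : ℕ) : ℤ)).card <
      (Finset.univ : Finset (Fin L → Fin n)).card := by
    rw [Int.card_Icc, Finset.card_univ]
    have h1 : (((M * L * m ^ L : ℕ) : ℤ) + 1 - -((M * L * m ^ L : ℕ) : ℤ)).toNat
        = 2 * (M * L * m ^ L) + 1 := by omega
    rw [h1]
    have h2 : Fintype.card (Fin L → Fin n) = n ^ L := by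
      simp [Fintype.card_fun]
    rw [h2]
    exact hL
  obtain ⟨v₁, -, v₂, -, hne, heq⟩ :=
    Finset.exists_ne_map_eq_of_card_lt_of_maps_to hcard (fun v _ => hmaps v)
  -- relate Zword and Tword
  have hDT : ∀ w : List (Fin n), (D : ℚ) * Tword m b w = ((Zword m c w : ℤ) : ℚ) := by
    intro w
    induction w with
    | nil => simp [Tword, Zword]
    | cons i w ih =>
      calc (D : ℚ) * Tword m b (i :: w)
          = (b i) * (D : ℚ) + (m : ℚ) * ((D : ℚ) * Tword m b w) := by
            simp only [Tword, List.foldr_cons]; ring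
        _ = ((c i : ℤ) : ℚ) + (m : ℚ) * ((Zword m c w : ℤ) : ℚ) := by rw [hbc i, ih]
        _ = ((Zword m c (i :: w) : ℤ) : ℚ) := by
            simp only [Zword, List.foldr_cons]; push_cast; ring
  have hT : Tword m b (List.ofFn v₁) = Tword m b (List.ofFn v₂) := by
    have hD' : (D : ℚ) ≠ 0 := by exact_mod_cast hD0.ne'
    apply mul_left_cancel₀ hD'
    rw [hDT, hDT, heq]
  refine ⟨L, List.ofFn v₁, List.ofFn v₂, List.length_ofFn, List.length_ofFn, ?_, ?_⟩
  · intro h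
    exact hne (List.ofFn_injective h)
  · rw [comp_eq m b f hf, comp_eq m b f hf, List.length_ofFn, List.length_ofFn, hT]
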